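/- Let Θ ⊆ ℝᵐ be a Borel set, G : Θ → ℝⁿ measurable, α > 0, ρ a probability measure on Θ with finite second moment, and ρ_y a probability measure on ℝⁿ with finite second moment. Define G̃ : Θ → ℝⁿ × ℝᵐ by G̃(x) = (G(x), √α · x), and let ρ̄_y = ρ_y ⊗ δ₀ be the product of ρ_y with the Dirac measure at 0 ∈ ℝᵐ. Then the infimum of ∫ ‖u − v‖² dπ(u,v) over couplings π ∈ Γ(G̃_# ρ, ρ̄_y) equals [the infimum of ∫ ‖a − b‖² dγ(a,b) over couplings γ ∈ Γ(G_# ρ, ρ_y)] + α ∫ ‖x‖² dρ(x). In other words, W₂²(G̃_#ρ, ρ_y ⊗ δ₀) = W₂²(G_#ρ, ρ_y) + α ∫‖x‖² dρ. -/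

import Mathlib

open MeasureTheory Real
open scoped ENNReal

/-- `cpl` is a coupling of `μ` and `ν`: a measure on the product whose marginals
are `μ` and `ν`. -/
def IsCoupling {X Y : Type*} [MeasurableSpace X] [MeasurableSpace Y]
    (μ : Measure X) (ν : Measure Y) (cpl : Measure (X × Y)) : Prop :=
  cpl.map Prod.fst = μ ∧ cpl.map Prod.snd = ν

/-- Splitting a `lintegral` of `ofReal` of a sum of nonnegative functions. -/
lemma lintegral_ofReal_add_split {X : Type*} [MeasurableSpace X] (μ : Measure X)
    {f g : X → ℝ} (hf : Measurable f) (hf0 : ∀ x, 0 ≤ f x) (hg0 : ∀ x, 0 ≤ g x) :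
    ∫⁻ x, ENNReal.ofReal (f x + g x) ∂μ =
      ∫⁻ x, ENNReal.ofReal (f x) ∂μ + ∫⁻ x, ENNReal.ofReal (g x) ∂μ := by
  rw [← lintegral_add_left hf.ennreal_ofReal]
  exact lintegral_congr fun x => ENNReal.ofReal_add (hf0 x) (hg0 x)

lemma meas_norm_sub_sq {k : ℕ} {X : Type*} [MeasurableSpace X]
    {f g : X → EuclideanSpace ℝ (Fin k)} (hf : Measurable f) (hg : Measurable g) :
    Measurable fun x => ‖f x - g x‖ ^ 2 := by fun_prop

lemma meas_norm_sq {k : ℕ} {X : Type*} [MeasurableSpace X]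
    {f : X → EuclideanSpace ℝ (Fin k)} (hf : Measurable f) :
    Measurable fun x => ENNReal.ofReal (‖f x‖ ^ 2) := by fun_prop

/-- Let `Θ ⊆ ℝᵐ` be Borel, `G : Θ → ℝⁿ` measurable, `α > 0`, `ρ` a
probability measure on `Θ` and `ρy` on `ℝⁿ`, both with finite second moments. With
`G̃ x = (G x, √α • x)` and `ρ̄y = ρy ⊗ δ₀`, the squared 2-Wasserstein cost (Euclidean
norm on the product: `‖(a,b) - (a',b')‖² = ‖a - a'‖² + ‖b - b'‖²`) decomposes as
`W₂²(G̃_#ρ, ρy ⊗ δ₀) = W₂²(G_#ρ, ρy) + α ∫‖x‖² dρ`. -/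
theorem stmt_8 {m n : ℕ} (Θ : Set (EuclideanSpace ℝ (Fin m))) (hΘ : MeasurableSet Θ)
    (G : EuclideanSpace ℝ (Fin m) → EuclideanSpace ℝ (Fin n)) (hG : Measurable G)
    (α : ℝ) (hα : 0 < α)
    (ρ : Measure (EuclideanSpace ℝ (Fin m))) [IsProbabilityMeasure ρ] (hρΘ : ρ Θᶜ = 0)
    (hρ2 : ∫⁻ x, ENNReal.ofReal (‖x‖ ^ 2) ∂ρ < ⊤)
    (ρy : Measure (EuclideanSpace ℝ (Fin n))) [IsProbabilityMeasure ρy]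
    (hρy2 : ∫⁻ y, ENNReal.ofReal (‖y‖ ^ 2) ∂ρy < ⊤) :
    (⨅ (cpl : Measure ((EuclideanSpace ℝ (Fin n) × EuclideanSpace ℝ (Fin m)) ×
        (EuclideanSpace ℝ (Fin n) × EuclideanSpace ℝ (Fin m))))
      (_ : IsCoupling (ρ.map fun x => (G x, Real.sqrt α • x))
        (ρy.prod (Measure.dirac (0 : EuclideanSpace ℝ (Fin m)))) cpl),
      ∫⁻ z, ENNReal.ofReal (‖z.1.1 - z.2.1‖ ^ 2 + ‖z.1.2 - z.2.2‖ ^ 2) ∂cpl) =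
    (⨅ (γ : Measure (EuclideanSpace ℝ (Fin n) × EuclideanSpace ℝ (Fin n)))
      (_ : IsCoupling (ρ.map G) ρy γ),
      ∫⁻ z, ENNReal.ofReal (‖z.1 - z.2‖ ^ 2) ∂γ) +
    ∫⁻ x, ENNReal.ofReal (α * ‖x‖ ^ 2) ∂ρ := by
  classical
  set Gt : EuclideanSpace ℝ (Fin m) → EuclideanSpace ℝ (Fin n) × EuclideanSpace ℝ (Fin m) :=
    fun x => (G x, Real.sqrt α • x) with hGt
  have mGt : Measurable Gt := hG.prodMk (by fun_prop)
  set c : ℝ≥0∞ := ∫⁻ x, ENNReal.ofReal (α * ‖x‖ ^ 2) ∂ρ with hc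
  have hsm : ∀ x : EuclideanSpace ℝ (Fin m), ‖Real.sqrt α • x‖ ^ 2 = α * ‖x‖ ^ 2 := fun x => by
    rw [norm_smul, Real.norm_eq_abs, abs_of_nonneg (Real.sqrt_nonneg _), mul_pow,
      Real.sq_sqrt hα.le]
  have hsmint : ∫⁻ x, ENNReal.ofReal (‖Real.sqrt α • x‖ ^ 2) ∂ρ = c :=
    lintegral_congr fun x => by rw [hsm]
  have mγf : Measurable (fun w : EuclideanSpace ℝ (Fin n) × EuclideanSpace ℝ (Fin n) =>
      ENNReal.ofReal (‖w.1 - w.2‖ ^ 2)) :=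
    (meas_norm_sub_sq measurable_fst measurable_snd).ennreal_ofReal
  -- Key step A: any coupling `cpl` on the left has cost `cost (proj cpl) + c`.
  have keyA : ∀ cpl : Measure ((EuclideanSpace ℝ (Fin n) × EuclideanSpace ℝ (Fin m)) ×
        (EuclideanSpace ℝ (Fin n) × EuclideanSpace ℝ (Fin m))),
      IsCoupling (ρ.map Gt) (ρy.prod (Measure.dirac (0 : EuclideanSpace ℝ (Fin m)))) cpl →
      ∃ γ : Measure (EuclideanSpace ℝ (Fin n) × EuclideanSpace ℝ (Fin n)),
        IsCoupling (ρ.map G) ρy γ ∧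
        ∫⁻ z, ENNReal.ofReal (‖z.1.1 - z.2.1‖ ^ 2 + ‖z.1.2 - z.2.2‖ ^ 2) ∂cpl =
          (∫⁻ w, ENNReal.ofReal (‖w.1 - w.2‖ ^ 2) ∂γ) + c := by
    intro cpl hcpl
    set pj : (EuclideanSpace ℝ (Fin n) × EuclideanSpace ℝ (Fin m)) ×
        (EuclideanSpace ℝ (Fin n) × EuclideanSpace ℝ (Fin m)) →
        EuclideanSpace ℝ (Fin n) × EuclideanSpace ℝ (Fin n) :=
      fun z => (z.1.1, z.2.1) with hpj
    have mpj : Measurable pj := measurable_fst.fst.prodMk measurable_snd.fst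
    refine ⟨cpl.map pj, ⟨?_, ?_⟩, ?_⟩
    · rw [Measure.map_map measurable_fst mpj]
      have h1 : (Prod.fst ∘ pj) = (Prod.fst ∘ (Prod.fst : _ →
          EuclideanSpace ℝ (Fin n) × EuclideanSpace ℝ (Fin m))) := rfl
      rw [h1, ← Measure.map_map measurable_fst measurable_fst, hcpl.1,
        Measure.map_map measurable_fst mGt]
      rfl
    · rw [Measure.map_map measurable_snd mpj]
      have h1 : (Prod.snd ∘ pj) = (Prod.fst ∘ (Prod.snd : _ →
          EuclideanSpace ℝ (Fin n) × EuclideanSpace ℝ (Fin m))) := rfl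
      rw [h1, ← Measure.map_map measurable_fst measurable_snd, hcpl.2]
      simp
    · -- split the cost
      rw [lintegral_ofReal_add_split _
        (meas_norm_sub_sq measurable_fst.fst measurable_snd.fst)
        (fun z => by positivity) (fun z => by positivity)]
      congr 1
      · rw [lintegral_map mγf mpj]
      · -- second marginal's second coordinate vanishes a.e.
        have h0 : ∀ᵐ z ∂cpl, z.2.2 = (0 : EuclideanSpace ℝ (Fin m)) := by
          rw [ae_iff]
          have hs : MeasurableSet {w : EuclideanSpace ℝ (Fin n) × EuclideanSpace ℝ (Fin m) |
              w.2 ≠ 0} :=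
            ((measurableSet_singleton (0 : EuclideanSpace ℝ (Fin m))).preimage
              measurable_snd).compl
          have h2 : {z : (EuclideanSpace ℝ (Fin n) × EuclideanSpace ℝ (Fin m)) ×
              (EuclideanSpace ℝ (Fin n) × EuclideanSpace ℝ (Fin m)) | ¬ z.2.2 = 0} =
              Prod.snd ⁻¹' {w | w.2 ≠ 0} := rfl
          rw [h2, ← Measure.map_apply measurable_snd hs, hcpl.2, Measure.prod_apply hs]
          simp
        calc ∫⁻ z, ENNReal.ofReal (‖z.1.2 - z.2.2‖ ^ 2) ∂cpl
            = ∫⁻ z, ENNReal.ofReal (‖z.1.2‖ ^ 2) ∂cpl := by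
              refine lintegral_congr_ae (h0.mono fun z hz => ?_)
              simp only [hz, sub_zero]
          _ = ∫⁻ w, ENNReal.ofReal (‖w.2‖ ^ 2) ∂(cpl.map Prod.fst) := by
              rw [lintegral_map (meas_norm_sq measurable_snd) measurable_fst]
          _ = ∫⁻ x, ENNReal.ofReal (‖Real.sqrt α • x‖ ^ 2) ∂ρ := by
              rw [hcpl.1, lintegral_map (meas_norm_sq measurable_snd) mGt]
          _ = c := hsmint
  -- Key step B: each coupling `γ` on the right lifts to the left with cost `cost γ + c`.
  have keyB : ∀ γ : Measure (EuclideanSpace ℝ (Fin n) × EuclideanSpace ℝ (Fin n)),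
      IsCoupling (ρ.map G) ρy γ →
      ∃ cpl : Measure ((EuclideanSpace ℝ (Fin n) × EuclideanSpace ℝ (Fin m)) ×
          (EuclideanSpace ℝ (Fin n) × EuclideanSpace ℝ (Fin m))),
        IsCoupling (ρ.map Gt) (ρy.prod (Measure.dirac (0 : EuclideanSpace ℝ (Fin m)))) cpl ∧
        ∫⁻ z, ENNReal.ofReal (‖z.1.1 - z.2.1‖ ^ 2 + ‖z.1.2 - z.2.2‖ ^ 2) ∂cpl =
          (∫⁻ w, ENNReal.ofReal (‖w.1 - w.2‖ ^ 2) ∂γ) + c := by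
    intro γ hγ
    have hmapG : IsProbabilityMeasure (ρ.map G) := Measure.isProbabilityMeasure_map hG.aemeasurable
    have hγp : IsProbabilityMeasure γ := by
      constructor
      rw [← Set.preimage_univ
          (f := (Prod.fst : EuclideanSpace ℝ (Fin n) × EuclideanSpace ℝ (Fin n) →
            EuclideanSpace ℝ (Fin n))),
        ← Measure.map_apply measurable_fst MeasurableSet.univ, hγ.1]
      exact measure_univ
    have hfst : γ.fst = ρ.map G := hγ.1
    set κ := γ.condKernel with hκ
    set μ : Measure (EuclideanSpace ℝ (Fin m) × EuclideanSpace ℝ (Fin n)) :=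
      ρ.compProd (κ.comap G hG) with hμ
    set pm : EuclideanSpace ℝ (Fin m) × EuclideanSpace ℝ (Fin n) →
        EuclideanSpace ℝ (Fin n) × EuclideanSpace ℝ (Fin n) :=
      fun p => (G p.1, p.2) with hpm
    have mpm : Measurable pm := (hG.comp measurable_fst).prodMk measurable_snd
    -- the joint law of `(G x, y)` under `μ` is `γ`
    have hμγ : μ.map pm = γ := by
      ext s hs
      rw [Measure.map_apply mpm hs, hμ, Measure.compProd_apply (mpm hs)]
      have heq : ∀ x, (κ.comap G hG) x (Prod.mk x ⁻¹' (pm ⁻¹' s)) =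
          κ (G x) (Prod.mk (G x) ⁻¹' s) := fun x => by
        rw [ProbabilityTheory.Kernel.comap_apply]
        rfl
      rw [lintegral_congr heq]
      have h3 : ∫⁻ x, κ (G x) (Prod.mk (G x) ⁻¹' s) ∂ρ =
          ∫⁻ u, κ u (Prod.mk u ⁻¹' s) ∂(ρ.map G) := by
        rw [lintegral_map (ProbabilityTheory.Kernel.measurable_kernel_prodMk_left hs) hG]
      rw [h3, ← Measure.compProd_apply hs, ← hfst, hκ, Measure.disintegrate]
    set T : EuclideanSpace ℝ (Fin m) × EuclideanSpace ℝ (Fin n) →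
        (EuclideanSpace ℝ (Fin n) × EuclideanSpace ℝ (Fin m)) ×
        (EuclideanSpace ℝ (Fin n) × EuclideanSpace ℝ (Fin m)) :=
      fun p => ((G p.1, Real.sqrt α • p.1), (p.2, 0)) with hT
    have mT : Measurable T :=
      ((hG.comp measurable_fst).prodMk (by fun_prop)).prodMk
        (measurable_snd.prodMk measurable_const)
    have hμfst : μ.map Prod.fst = ρ := Measure.fst_compProd ρ _
    refine ⟨μ.map T, ⟨?_, ?_⟩, ?_⟩
    · rw [Measure.map_map measurable_fst mT]
      have h1 : (Prod.fst ∘ T) = Gt ∘ Prod.fst := rfl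
      rw [h1, ← Measure.map_map mGt measurable_fst, hμfst]
    · rw [Measure.map_map measurable_snd mT]
      have h1 : (Prod.snd ∘ T) =
          (fun y => (y, (0 : EuclideanSpace ℝ (Fin m)))) ∘ Prod.snd := rfl
      have h2 : μ.map Prod.snd = ρy := by
        have h4 : (Prod.snd ∘ pm) =
            (Prod.snd : EuclideanSpace ℝ (Fin m) × EuclideanSpace ℝ (Fin n) →
              EuclideanSpace ℝ (Fin n)) := rfl
        rw [← hγ.2, ← hμγ, Measure.map_map measurable_snd mpm, h4]
      have mpair : Measurable (fun y : EuclideanSpace ℝ (Fin n) =>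
          (y, (0 : EuclideanSpace ℝ (Fin m)))) := measurable_id.prodMk measurable_const
      rw [h1, ← Measure.map_map mpair measurable_snd, h2, Measure.prod_dirac]
    · have mcost : Measurable (fun z : (EuclideanSpace ℝ (Fin n) × EuclideanSpace ℝ (Fin m)) ×
          (EuclideanSpace ℝ (Fin n) × EuclideanSpace ℝ (Fin m)) =>
          ENNReal.ofReal (‖z.1.1 - z.2.1‖ ^ 2 + ‖z.1.2 - z.2.2‖ ^ 2)) :=
        ((meas_norm_sub_sq measurable_fst.fst measurable_snd.fst).add
          (meas_norm_sub_sq measurable_fst.snd measurable_snd.snd)).ennreal_ofReal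
      rw [lintegral_map mcost mT]
      have hpt : ∀ p : EuclideanSpace ℝ (Fin m) × EuclideanSpace ℝ (Fin n),
          ENNReal.ofReal (‖(T p).1.1 - (T p).2.1‖ ^ 2 + ‖(T p).1.2 - (T p).2.2‖ ^ 2) =
          ENNReal.ofReal (‖G p.1 - p.2‖ ^ 2 + ‖Real.sqrt α • p.1‖ ^ 2) := fun p => by
        simp [hT]
      have msplit : Measurable (fun p : EuclideanSpace ℝ (Fin m) × EuclideanSpace ℝ (Fin n) =>
          ‖G p.1 - p.2‖ ^ 2) := meas_norm_sub_sq (hG.comp measurable_fst) measurable_snd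
      rw [lintegral_congr hpt,
        lintegral_ofReal_add_split _ msplit
          (fun p => by positivity) (fun p => by positivity)]
      congr 1
      · rw [← hμγ, lintegral_map mγf mpm]
      · calc ∫⁻ p, ENNReal.ofReal (‖Real.sqrt α • p.1‖ ^ 2) ∂μ
            = ∫⁻ x, ENNReal.ofReal (‖Real.sqrt α • x‖ ^ 2) ∂(μ.map Prod.fst) := by
              have msm : Measurable (fun x : EuclideanSpace ℝ (Fin m) =>
                  ENNReal.ofReal (‖Real.sqrt α • x‖ ^ 2)) :=
                meas_norm_sq (by fun_prop)
              rw [lintegral_map msm measurable_fst]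
          _ = c := by rw [hμfst]; exact hsmint
  -- put the two inequalities together
  rw [ENNReal.iInf_add]
  simp_rw [ENNReal.iInf_add]
  refine le_antisymm (le_iInf₂ fun γ hγ => ?_) (le_iInf₂ fun cpl hcpl => ?_)
  · obtain ⟨cpl, hcpl, heq⟩ := keyB γ hγ
    exact heq ▸ iInf₂_le cpl hcpl
  · obtain ⟨γ, hγ, heq⟩ := keyA cpl hcpl
    exact heq ▸ iInf₂_le γ hγ
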